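/- arXiv:1501.04669 — 2 statements merged into one kernel-verified Lean document; each statement's English description precedes it below -/
import Mathlib

section
/- Let $E = \{e_0, e_1, \dots, e_N, e_0 - e_1, e_1 - e_2, \dots, e_{N-1} - e_N, \zeta\} \subset \mathbb{R}^{N+1}$ where $N \ge 2$, $e_j$ are the standard basis vectors, and $\zeta = \sum_{j=0}^N (-1)^j e_j$. Then for every pair of distinct vectors $(v,w)$ from $E$, there exist two subsets $B_1, B_2 \subset E$, each of which is a basis of $\mathbb{R}^{N+1}$, such that $B_1 \cap B_2 = \{v\}$ and $E \setminus (B_1 \cup B_2) = \{w\}$. -/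
open Finset

/-- The `j`-th standard basis vector of `ℝ^{N+1}` (as `Fin (N+1) → ℝ`), indexed by `j : ℕ`. -/
noncomputable def stdv (N : ℕ) (j : ℕ) : Fin (N + 1) → ℝ :=
  fun i => if (i : ℕ) = j then 1 else 0

/-- `ζ = ∑_{j=0}^N (-1)^j e_j`. -/
noncomputable def zeta1 (N : ℕ) : Fin (N + 1) → ℝ :=
  ∑ j ∈ Finset.range (N + 1), ((-1 : ℝ) ^ j) • stdv N j

/-- The set `E₁ = {e₀,…,e_N} ∪ {e₀-e₁,…,e_{N-1}-e_N} ∪ {ζ}`. -/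
noncomputable def E1set (N : ℕ) : Set (Fin (N + 1) → ℝ) :=
  {x | ∃ j ≤ N, x = stdv N j} ∪ {x | ∃ j < N, x = stdv N j - stdv N (j + 1)} ∪ {zeta1 N}

noncomputable def fvec (N j : ℕ) : Fin (N + 1) → ℝ := stdv N j - stdv N (j + 1)

lemma stdv_apply (N j : ℕ) (i : Fin (N + 1)) : stdv N j i = if (i : ℕ) = j then 1 else 0 := rfl

lemma zeta1_apply (N : ℕ) (i : Fin (N + 1)) : zeta1 N i = (-1 : ℝ) ^ (i : ℕ) := by
  unfold zeta1
  simp only [Finset.sum_apply, Pi.smul_apply, stdv_apply, smul_eq_mul]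
  rw [Finset.sum_eq_single (i : ℕ)]
  · simp
  · intro j _ hj
    simp [Ne.symm hj]
  · intro h
    exact absurd (Finset.mem_range.mpr (by omega)) h

lemma mem_E1_iff (N : ℕ) (x : Fin (N + 1) → ℝ) :
    x ∈ E1set N ↔ (∃ j ≤ N, x = stdv N j) ∨ (∃ j < N, x = fvec N j) ∨ x = zeta1 N := by
  unfold E1set fvec
  constructor
  · rintro ((h | h) | h)
    · exact Or.inl h
    · exact Or.inr (Or.inl h)
    · exact Or.inr (Or.inr h)
  · rintro (h | h | h)
    · exact Or.inl (Or.inl h)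
    · exact Or.inl (Or.inr h)
    · exact Or.inr h

-- distinctness
lemma stdv_inj {N i j : ℕ} (hi : i ≤ N) (hj : j ≤ N) (h : stdv N i = stdv N j) : i = j := by
  by_contra hne
  have := congrFun h ⟨i, by omega⟩
  simp [stdv_apply, hne] at this

lemma stdv_ne_fvec {N i j : ℕ} (hi : i ≤ N) (hj : j < N) : stdv N i ≠ fvec N j := by
  intro h
  have := congrFun h ⟨j + 1, by omega⟩
  simp only [stdv_apply, fvec, Pi.sub_apply] at this
  by_cases h1 : j + 1 = i
  · have h2 : i ≠ j := by omega
    simp [h1, h2] at this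
    norm_num at this
  · simp [h1] at this

lemma fvec_inj {N i j : ℕ} (hi : i < N) (hj : j < N) (h : fvec N i = fvec N j) : i = j := by
  by_contra hne
  have := congrFun h ⟨i, by omega⟩
  simp only [fvec, Pi.sub_apply, stdv_apply] at this
  by_cases h1 : i = j + 1 <;> simp [hne, h1] at this <;> norm_num at this

lemma zeta1_ne_stdv {N i : ℕ} (hN : 1 ≤ N) : zeta1 N ≠ stdv N i := by
  intro h
  by_cases hi : i = 0
  · have := congrFun h ⟨1, by omega⟩
    simp [zeta1_apply, stdv_apply, hi] at this
  · have := congrFun h ⟨0, by omega⟩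
    simp [zeta1_apply, stdv_apply, Ne.symm hi] at this

lemma zeta1_ne_fvec {N j : ℕ} (hN : 2 ≤ N) (hj : j < N) : zeta1 N ≠ fvec N j := by
  intro h
  rcases Nat.lt_or_ge j 1 with h0 | h0
  · -- j = 0, eval at 2
    have := congrFun h ⟨2, by omega⟩
    simp only [zeta1_apply, fvec, Pi.sub_apply, stdv_apply] at this
    interval_cases j <;> norm_num at this
  · -- j ≥ 1, eval at 0
    have := congrFun h ⟨0, by omega⟩
    simp only [zeta1_apply, fvec, Pi.sub_apply, stdv_apply] at this
    have h1 : (0 : ℕ) ≠ j := by omega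
    have h2 : (0 : ℕ) ≠ j + 1 := by omega
    simp [h1, h2] at this

-- span machinery
lemma span_top_of {N : ℕ} {B : Set (Fin (N + 1) → ℝ)}
    (h : ∀ j : ℕ, j ≤ N → stdv N j ∈ Submodule.span ℝ B) : ⊤ ≤ Submodule.span ℝ B := by
  intro x _
  have hx : x = ∑ i : Fin (N + 1), x i • stdv N (i : ℕ) := by
    funext j
    simp only [Finset.sum_apply, Pi.smul_apply, stdv_apply, smul_eq_mul]
    rw [Finset.sum_eq_single j]
    · simp
    · intro i _ hi
      have : (j : ℕ) ≠ (i : ℕ) := fun hc => hi (Fin.ext hc.symm)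
      simp [this]
    · simp
  rw [hx]
  exact Submodule.sum_mem _ fun i _ =>
    Submodule.smul_mem _ _ (h i (Nat.lt_succ_iff.mp i.isLt))

lemma interval_fill {N : ℕ} {B : Set (Fin (N + 1) → ℝ)} (a b m : ℕ) (ham : a ≤ m) (hmb : m ≤ b)
    (hf : ∀ j, a ≤ j → j < b → fvec N j ∈ Submodule.span ℝ B)
    (he : stdv N m ∈ Submodule.span ℝ B) :
    ∀ j, a ≤ j → j ≤ b → stdv N j ∈ Submodule.span ℝ B := by
  have key : ∀ j : ℕ, stdv N j = fvec N j + stdv N (j + 1) := by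
    intro j; unfold fvec; ring
  have up : ∀ j, m ≤ j → j ≤ b → stdv N j ∈ Submodule.span ℝ B := by
    intro j hj
    induction j, hj using Nat.le_induction with
    | base => intro _; exact he
    | succ n hn ih =>
      intro hb2
      have h1 : stdv N (n + 1) = stdv N n - fvec N n := by
        rw [key n]; ring
      rw [h1]
      exact Submodule.sub_mem _ (ih (by omega)) (hf n (by omega) (by omega))
  have down : ∀ d, d ≤ m - a → stdv N (m - d) ∈ Submodule.span ℝ B := by
    intro d
    induction d with
    | zero => intro _; simpa using he
    | succ d ih =>
      intro hd
      have h1 : m - d = (m - (d + 1)) + 1 := by omega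
      rw [key (m - (d + 1)), ← h1]
      exact Submodule.add_mem _ (hf _ (by omega) (by omega)) (ih (by omega))
  intro j hja hjb
  rcases le_or_gt m j with h | h
  · exact up j h hjb
  · have hj : j = m - (m - j) := by omega
    rw [hj]
    exact down (m - j) (by omega)

lemma zeta_fill {N : ℕ} {B : Set (Fin (N + 1) → ℝ)} (m : ℕ) (hm : m ≤ N)
    (hz : zeta1 N ∈ Submodule.span ℝ B)
    (h : ∀ j, j ≤ N → j ≠ m → stdv N j ∈ Submodule.span ℝ B) :
    stdv N m ∈ Submodule.span ℝ B := by
  have hmem : m ∈ Finset.range (N + 1) := Finset.mem_range.mpr (by omega)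
  have key : ((-1 : ℝ) ^ m) • stdv N m =
      zeta1 N - ∑ j ∈ (Finset.range (N + 1)).erase m, ((-1 : ℝ) ^ j) • stdv N j := by
    unfold zeta1
    rw [← Finset.add_sum_erase _ _ hmem]
    ring
  have h2 : ((-1 : ℝ) ^ m) • stdv N m ∈ Submodule.span ℝ B := by
    rw [key]
    refine Submodule.sub_mem _ hz (Submodule.sum_mem _ fun j hj => ?_)
    have hj1 : j ≤ N := by
      have := Finset.mem_range.mp (Finset.mem_of_mem_erase hj); omega
    exact Submodule.smul_mem _ _ (h j hj1 (Finset.ne_of_mem_erase hj))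
  have h3 := Submodule.smul_mem _ ((-1 : ℝ) ^ m) h2
  rwa [smul_smul, ← pow_add, Even.neg_one_pow ⟨m, rfl⟩, one_smul] at h3

lemma basisPair {N : ℕ} (b : Fin (N + 1) → (Fin (N + 1) → ℝ))
    (h : ⊤ ≤ Submodule.span ℝ (Set.range b)) :
    LinearIndependent ℝ ((↑) : Set.range b → (Fin (N + 1) → ℝ)) ∧
      Submodule.span ℝ (Set.range b) = ⊤ := by
  have card : Fintype.card (Fin (N + 1)) = Module.finrank ℝ (Fin (N + 1) → ℝ) := by
    simp [Module.finrank_fin_fun]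
  have li := linearIndependent_of_top_le_span_of_card_eq_finrank h card
  have li' : LinearIndependent ℝ b := li
  exact ⟨(linearIndepOn_id_range_iff li'.injective).mpr li', le_antisymm le_top h⟩

lemma e_mem_E1 {N j : ℕ} (hj : j ≤ N) : stdv N j ∈ E1set N :=
  (mem_E1_iff _ _).mpr (Or.inl ⟨j, hj, rfl⟩)
lemma f_mem_E1 {N j : ℕ} (hj : j < N) : fvec N j ∈ E1set N :=
  (mem_E1_iff _ _).mpr (Or.inr (Or.inl ⟨j, hj, rfl⟩))
lemma z_mem_E1 {N : ℕ} : zeta1 N ∈ E1set N :=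
  (mem_E1_iff _ _).mpr (Or.inr (Or.inr rfl))

-- Family A : the standard basis
noncomputable def famA (N : ℕ) : Fin (N + 1) → (Fin (N + 1) → ℝ) := fun i => stdv N i

lemma famA_char (N : ℕ) (x : Fin (N + 1) → ℝ) :
    x ∈ Set.range (famA N) ↔ ∃ j ≤ N, x = stdv N j := by
  constructor
  · rintro ⟨i, rfl⟩; exact ⟨i, by omega, rfl⟩
  · rintro ⟨j, hj, rfl⟩; exact ⟨⟨j, by omega⟩, rfl⟩

lemma famA_top (N : ℕ) : ⊤ ≤ Submodule.span ℝ (Set.range (famA N)) :=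
  span_top_of fun j hj => Submodule.subset_span ((famA_char N _).mpr ⟨j, hj, rfl⟩)

-- Family B : F ∪ {e_k}
noncomputable def famB (N k : ℕ) : Fin (N + 1) → (Fin (N + 1) → ℝ) :=
  fun i => if (i : ℕ) < N then fvec N i else stdv N k

lemma famB_char (N k : ℕ) (x : Fin (N + 1) → ℝ) :
    x ∈ Set.range (famB N k) ↔ (∃ j < N, x = fvec N j) ∨ x = stdv N k := by
  constructor
  · rintro ⟨i, rfl⟩
    by_cases h : (i : ℕ) < N
    · exact Or.inl ⟨i, h, by simp [famB, h]⟩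
    · exact Or.inr (by simp [famB, h])
  · rintro (⟨j, hj, rfl⟩ | rfl)
    · exact ⟨⟨j, by omega⟩, by simp [famB, hj]⟩
    · exact ⟨⟨N, by omega⟩, by simp [famB]⟩

lemma famB_top (N k : ℕ) (hk : k ≤ N) : ⊤ ≤ Submodule.span ℝ (Set.range (famB N k)) := by
  apply span_top_of
  intro j hj
  refine interval_fill 0 N k (by omega) hk (fun j' _ hj' =>
    Submodule.subset_span ((famB_char N k _).mpr (Or.inl ⟨j', hj', rfl⟩)))
    (Submodule.subset_span ((famB_char N k _).mpr (Or.inr rfl))) j (by omega) hj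

-- Family C : (A \ {e_k}) ∪ {f_k}
noncomputable def famC (N k : ℕ) : Fin (N + 1) → (Fin (N + 1) → ℝ) :=
  fun i => if (i : ℕ) = k then fvec N k else stdv N i

lemma famC_char (N k : ℕ) (hk : k < N) (x : Fin (N + 1) → ℝ) :
    x ∈ Set.range (famC N k) ↔ (∃ j ≤ N, j ≠ k ∧ x = stdv N j) ∨ x = fvec N k := by
  constructor
  · rintro ⟨i, rfl⟩
    by_cases h : (i : ℕ) = k
    · exact Or.inr (by simp [famC, h])
    · exact Or.inl ⟨i, by omega, h, by simp [famC, h]⟩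
  · rintro (⟨j, hj, hjk, rfl⟩ | rfl)
    · exact ⟨⟨j, by omega⟩, by simp [famC, hjk]⟩
    · exact ⟨⟨k, by omega⟩, by simp [famC]⟩

lemma famC_top (N k : ℕ) (hk : k < N) : ⊤ ≤ Submodule.span ℝ (Set.range (famC N k)) := by
  apply span_top_of
  intro j hj
  by_cases hjk : j = k
  · subst hjk
    refine interval_fill j (j + 1) (j + 1) (by omega) (by omega) (fun j' h1 h2 => ?_) ?_ j
      (by omega) (by omega)
    · rw [show j' = j by omega]
      exact Submodule.subset_span ((famC_char N j hk _).mpr (Or.inr rfl))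
    · exact Submodule.subset_span ((famC_char N j hk _).mpr
        (Or.inl ⟨j + 1, by omega, by omega, rfl⟩))
  · exact Submodule.subset_span ((famC_char N k hk _).mpr (Or.inl ⟨j, hj, hjk, rfl⟩))

-- Family D : (A \ {e_m}) ∪ {ζ}
noncomputable def famD (N m : ℕ) : Fin (N + 1) → (Fin (N + 1) → ℝ) :=
  fun i => if (i : ℕ) = m then zeta1 N else stdv N i

lemma famD_char (N m : ℕ) (hm : m ≤ N) (x : Fin (N + 1) → ℝ) :
    x ∈ Set.range (famD N m) ↔ (∃ j ≤ N, j ≠ m ∧ x = stdv N j) ∨ x = zeta1 N := by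
  constructor
  · rintro ⟨i, rfl⟩
    by_cases h : (i : ℕ) = m
    · exact Or.inr (by simp [famD, h])
    · exact Or.inl ⟨i, by omega, h, by simp [famD, h]⟩
  · rintro (⟨j, hj, hjm, rfl⟩ | rfl)
    · exact ⟨⟨j, by omega⟩, by simp [famD, hjm]⟩
    · exact ⟨⟨m, by omega⟩, by simp [famD]⟩

lemma famD_top (N m : ℕ) (hm : m ≤ N) : ⊤ ≤ Submodule.span ℝ (Set.range (famD N m)) := by
  apply span_top_of
  intro j hj
  by_cases hjm : j = m
  · subst hjm
    refine zeta_fill j hj (Submodule.subset_span ((famD_char N j hm _).mpr (Or.inr rfl)))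
      (fun j' hj' hne => Submodule.subset_span ((famD_char N j hm _).mpr
        (Or.inl ⟨j', hj', hne, rfl⟩)))
  · exact Submodule.subset_span ((famD_char N m hm _).mpr (Or.inl ⟨j, hj, hjm, rfl⟩))

-- Family F : (F \ {f_l}) ∪ {e_p, e_q}  with p ≤ l < q ≤ N
noncomputable def famF (N l p q : ℕ) : Fin (N + 1) → (Fin (N + 1) → ℝ) :=
  fun i => if (i : ℕ) = l then stdv N p else if (i : ℕ) = N then stdv N q else fvec N i

lemma famF_char (N l p q : ℕ) (hl : l < N) (x : Fin (N + 1) → ℝ) :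
    x ∈ Set.range (famF N l p q) ↔
      (∃ j < N, j ≠ l ∧ x = fvec N j) ∨ x = stdv N p ∨ x = stdv N q := by
  constructor
  · rintro ⟨i, rfl⟩
    by_cases h1 : (i : ℕ) = l
    · exact Or.inr (Or.inl (by simp [famF, h1]))
    · by_cases h2 : (i : ℕ) = N
      · exact Or.inr (Or.inr (by simp [famF, h1, h2, show N ≠ l by omega]))
      · exact Or.inl ⟨i, by omega, h1, by simp [famF, h1, h2]⟩
  · rintro (⟨j, hj, hjl, rfl⟩ | rfl | rfl)
    · exact ⟨⟨j, by omega⟩, by simp [famF, hjl, show j ≠ N by omega]⟩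
    · exact ⟨⟨l, by omega⟩, by simp [famF]⟩
    · exact ⟨⟨N, by omega⟩, by simp [famF, show N ≠ l by omega]⟩

lemma famF_top (N l p q : ℕ) (hpl : p ≤ l) (hlq : l < q) (hq : q ≤ N) :
    ⊤ ≤ Submodule.span ℝ (Set.range (famF N l p q)) := by
  have hl : l < N := by omega
  have hf : ∀ j, j < N → j ≠ l → fvec N j ∈ Submodule.span ℝ (Set.range (famF N l p q)) :=
    fun j hj hjl => Submodule.subset_span ((famF_char N l p q hl _).mpr (Or.inl ⟨j, hj, hjl, rfl⟩))
  have hep : stdv N p ∈ Submodule.span ℝ (Set.range (famF N l p q)) :=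
    Submodule.subset_span ((famF_char N l p q hl _).mpr (Or.inr (Or.inl rfl)))
  have heq : stdv N q ∈ Submodule.span ℝ (Set.range (famF N l p q)) :=
    Submodule.subset_span ((famF_char N l p q hl _).mpr (Or.inr (Or.inr rfl)))
  apply span_top_of
  intro j hj
  rcases le_or_gt j l with h | h
  · exact interval_fill 0 l p (by omega) hpl (fun j' h1 h2 => hf j' (by omega) (by omega))
      hep j (by omega) h
  · exact interval_fill (l + 1) N q (by omega) hq (fun j' h1 h2 => hf j' (by omega) (by omega))
      heq j (by omega) hj

-- Family G : (A \ {e_p, e_q}) ∪ {f_b, ζ}  with p ∈ {b, b+1}, q ∉ {b, b+1}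
noncomputable def famG (N b p q : ℕ) : Fin (N + 1) → (Fin (N + 1) → ℝ) :=
  fun i => if (i : ℕ) = p then fvec N b else if (i : ℕ) = q then zeta1 N else stdv N i

lemma famG_char (N b p q : ℕ) (hb : b < N) (hp : p = b ∨ p = b + 1)
    (hq1 : q ≠ b) (hq2 : q ≠ b + 1) (hq : q ≤ N) (x : Fin (N + 1) → ℝ) :
    x ∈ Set.range (famG N b p q) ↔
      (∃ j ≤ N, j ≠ p ∧ j ≠ q ∧ x = stdv N j) ∨ x = fvec N b ∨ x = zeta1 N := by
  constructor
  · rintro ⟨i, rfl⟩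
    by_cases h1 : (i : ℕ) = p
    · exact Or.inr (Or.inl (by simp [famG, h1]))
    · by_cases h2 : (i : ℕ) = q
      · exact Or.inr (Or.inr (by simp [famG, h1, h2, show q ≠ p by rcases hp with rfl | rfl <;> omega]))
      · exact Or.inl ⟨i, by omega, h1, h2, by simp [famG, h1, h2]⟩
  · rintro (⟨j, hj, hjp, hjq, rfl⟩ | rfl | rfl)
    · exact ⟨⟨j, by omega⟩, by simp [famG, hjp, hjq]⟩
    · exact ⟨⟨p, by omega⟩, by simp [famG]⟩
    · exact ⟨⟨q, by omega⟩, by simp [famG, show q ≠ p by omega]⟩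

lemma famG_top (N b p q : ℕ) (hb : b < N) (hp : p = b ∨ p = b + 1)
    (hq1 : q ≠ b) (hq2 : q ≠ b + 1) (hq : q ≤ N) :
    ⊤ ≤ Submodule.span ℝ (Set.range (famG N b p q)) := by
  have hchar := famG_char N b p q hb hp hq1 hq2 hq
  have hroot : ∀ j, j ≤ N → j ≠ p → j ≠ q →
      stdv N j ∈ Submodule.span ℝ (Set.range (famG N b p q)) :=
    fun j hj h1 h2 => Submodule.subset_span ((hchar _).mpr (Or.inl ⟨j, hj, h1, h2, rfl⟩))
  have hfb : fvec N b ∈ Submodule.span ℝ (Set.range (famG N b p q)) :=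
    Submodule.subset_span ((hchar _).mpr (Or.inr (Or.inl rfl)))
  have hz : zeta1 N ∈ Submodule.span ℝ (Set.range (famG N b p q)) :=
    Submodule.subset_span ((hchar _).mpr (Or.inr (Or.inr rfl)))
  -- e_p is in the span
  have hep : stdv N p ∈ Submodule.span ℝ (Set.range (famG N b p q)) := by
    rcases hp with rfl | rfl
    · exact interval_fill p (p + 1) (p + 1) (by omega) (by omega)
        (fun j' h1 h2 => by rw [show j' = p by omega]; exact hfb)
        (hroot (p + 1) (by omega) (by omega) (by omega)) p (by omega) (by omega)
    · exact interval_fill b (b + 1) b (by omega) (by omega)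
        (fun j' h1 h2 => by rw [show j' = b by omega]; exact hfb)
        (hroot b (by omega) (by omega) (by omega)) (b + 1) (by omega) (by omega)
  have hall : ∀ j, j ≤ N → j ≠ q →
      stdv N j ∈ Submodule.span ℝ (Set.range (famG N b p q)) := by
    intro j hj hjq
    by_cases hjp : j = p
    · subst hjp; exact hep
    · exact hroot j hj hjp hjq
  apply span_top_of
  intro j hj
  by_cases hjq : j = q
  · subst hjq; exact zeta_fill j hj hz hall
  · exact hall j hj hjq

-- Family H : (F \ {f_0}) ∪ {e_m, ζ}  with 1 ≤ m ≤ N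
noncomputable def famH (N m : ℕ) : Fin (N + 1) → (Fin (N + 1) → ℝ) :=
  fun i => if (i : ℕ) = 0 then stdv N m else if (i : ℕ) = N then zeta1 N else fvec N i

lemma famH_char (N m : ℕ) (hN : 1 ≤ N) (x : Fin (N + 1) → ℝ) :
    x ∈ Set.range (famH N m) ↔
      (∃ j, 1 ≤ j ∧ j < N ∧ x = fvec N j) ∨ x = stdv N m ∨ x = zeta1 N := by
  constructor
  · rintro ⟨i, rfl⟩
    by_cases h1 : (i : ℕ) = 0
    · exact Or.inr (Or.inl (by simp [famH, h1]))
    · by_cases h2 : (i : ℕ) = N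
      · exact Or.inr (Or.inr (by simp [famH, h1, h2, show N ≠ 0 by omega]))
      · exact Or.inl ⟨i, by omega, by omega, by simp [famH, h1, h2]⟩
  · rintro (⟨j, hj1, hj2, rfl⟩ | rfl | rfl)
    · exact ⟨⟨j, by omega⟩, by simp [famH, show j ≠ 0 by omega, show j ≠ N by omega]⟩
    · exact ⟨⟨0, by omega⟩, by simp [famH]⟩
    · exact ⟨⟨N, by omega⟩, by simp [famH, show N ≠ 0 by omega]⟩

lemma famH_top (N m : ℕ) (hm1 : 1 ≤ m) (hm : m ≤ N) :
    ⊤ ≤ Submodule.span ℝ (Set.range (famH N m)) := by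
  have hN : 1 ≤ N := by omega
  have hchar := famH_char N m hN
  have hf : ∀ j, 1 ≤ j → j < N → fvec N j ∈ Submodule.span ℝ (Set.range (famH N m)) :=
    fun j h1 h2 => Submodule.subset_span ((hchar _).mpr (Or.inl ⟨j, h1, h2, rfl⟩))
  have hem : stdv N m ∈ Submodule.span ℝ (Set.range (famH N m)) :=
    Submodule.subset_span ((hchar _).mpr (Or.inr (Or.inl rfl)))
  have hz : zeta1 N ∈ Submodule.span ℝ (Set.range (famH N m)) :=
    Submodule.subset_span ((hchar _).mpr (Or.inr (Or.inr rfl)))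
  have hup : ∀ j, 1 ≤ j → j ≤ N → stdv N j ∈ Submodule.span ℝ (Set.range (famH N m)) :=
    interval_fill 1 N m hm1 hm (fun j' h1 h2 => hf j' h1 h2) hem
  apply span_top_of
  intro j hj
  by_cases hj0 : j = 0
  · subst hj0
    exact zeta_fill 0 (by omega) hz (fun j' hj' hne => hup j' (by omega) hj')
  · exact hup j (by omega) hj

-- Family I : (F \ {f_0, f_l}) ∪ {e_p, e_q, ζ}  with 1 ≤ p ≤ l < q ≤ N
noncomputable def famI (N l p q : ℕ) : Fin (N + 1) → (Fin (N + 1) → ℝ) :=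
  fun i => if (i : ℕ) = 0 then stdv N p else if (i : ℕ) = l then stdv N q
    else if (i : ℕ) = N then zeta1 N else fvec N i

lemma famI_char (N l p q : ℕ) (hl1 : 1 ≤ l) (hl : l < N) (x : Fin (N + 1) → ℝ) :
    x ∈ Set.range (famI N l p q) ↔
      (∃ j, 1 ≤ j ∧ j < N ∧ j ≠ l ∧ x = fvec N j) ∨
        x = stdv N p ∨ x = stdv N q ∨ x = zeta1 N := by
  constructor
  · rintro ⟨i, rfl⟩
    by_cases h1 : (i : ℕ) = 0
    · exact Or.inr (Or.inl (by simp [famI, h1]))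
    · by_cases h2 : (i : ℕ) = l
      · exact Or.inr (Or.inr (Or.inl (by simp [famI, h1, h2, show l ≠ 0 by omega])))
      · by_cases h3 : (i : ℕ) = N
        · exact Or.inr (Or.inr (Or.inr (by simp [famI, h1, h2, h3, show N ≠ 0 by omega, show N ≠ l by omega])))
        · exact Or.inl ⟨i, by omega, by omega, h2, by simp [famI, h1, h2, h3]⟩
  · rintro (⟨j, hj1, hj2, hjl, rfl⟩ | rfl | rfl | rfl)
    · exact ⟨⟨j, by omega⟩,
        by simp [famI, show j ≠ 0 by omega, hjl, show j ≠ N by omega]⟩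
    · exact ⟨⟨0, by omega⟩, by simp [famI]⟩
    · exact ⟨⟨l, by omega⟩, by simp [famI, show l ≠ 0 by omega]⟩
    · exact ⟨⟨N, by omega⟩, by simp [famI, show N ≠ 0 by omega, show N ≠ l by omega]⟩

lemma famI_top (N l p q : ℕ) (hp1 : 1 ≤ p) (hpl : p ≤ l) (hlq : l < q) (hq : q ≤ N) :
    ⊤ ≤ Submodule.span ℝ (Set.range (famI N l p q)) := by
  have hl1 : 1 ≤ l := by omega
  have hl : l < N := by omega
  have hchar := famI_char N l p q hl1 hl
  have hf : ∀ j, 1 ≤ j → j < N → j ≠ l →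
      fvec N j ∈ Submodule.span ℝ (Set.range (famI N l p q)) :=
    fun j h1 h2 h3 => Submodule.subset_span ((hchar _).mpr (Or.inl ⟨j, h1, h2, h3, rfl⟩))
  have hep : stdv N p ∈ Submodule.span ℝ (Set.range (famI N l p q)) :=
    Submodule.subset_span ((hchar _).mpr (Or.inr (Or.inl rfl)))
  have heq : stdv N q ∈ Submodule.span ℝ (Set.range (famI N l p q)) :=
    Submodule.subset_span ((hchar _).mpr (Or.inr (Or.inr (Or.inl rfl))))
  have hz : zeta1 N ∈ Submodule.span ℝ (Set.range (famI N l p q)) :=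
    Submodule.subset_span ((hchar _).mpr (Or.inr (Or.inr (Or.inr rfl))))
  have hup : ∀ j, 1 ≤ j → j ≤ N → stdv N j ∈ Submodule.span ℝ (Set.range (famI N l p q)) := by
    intro j h1 h2
    rcases le_or_gt j l with h | h
    · exact interval_fill 1 l p hp1 hpl (fun j' hj1 hj2 => hf j' hj1 (by omega) (by omega))
        hep j h1 h
    · exact interval_fill (l + 1) N q (by omega) hq
        (fun j' hj1 hj2 => hf j' (by omega) hj2 (by omega)) heq j (by omega) h2
  apply span_top_of
  intro j hj
  by_cases hj0 : j = 0
  · subst hj0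
    exact zeta_fill 0 (by omega) hz (fun j' hj' hne => hup j' (by omega) hj')
  · exact hup j (by omega) hj

-- subset lemmas
lemma famA_sub (N : ℕ) : Set.range (famA N) ⊆ E1set N := by
  intro x hx
  obtain ⟨j, hj, rfl⟩ := (famA_char N x).mp hx
  exact e_mem_E1 hj

lemma famB_sub (N k : ℕ) (hk : k ≤ N) : Set.range (famB N k) ⊆ E1set N := by
  intro x hx
  rcases (famB_char N k x).mp hx with ⟨j, hj, rfl⟩ | rfl
  · exact f_mem_E1 hj
  · exact e_mem_E1 hk

lemma famC_sub (N k : ℕ) (hk : k < N) : Set.range (famC N k) ⊆ E1set N := by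
  intro x hx
  rcases (famC_char N k hk x).mp hx with ⟨j, hj, _, rfl⟩ | rfl
  · exact e_mem_E1 hj
  · exact f_mem_E1 hk

lemma famD_sub (N m : ℕ) (hm : m ≤ N) : Set.range (famD N m) ⊆ E1set N := by
  intro x hx
  rcases (famD_char N m hm x).mp hx with ⟨j, hj, _, rfl⟩ | rfl
  · exact e_mem_E1 hj
  · exact z_mem_E1

lemma famF_sub (N l p q : ℕ) (hl : l < N) (hp : p ≤ N) (hq : q ≤ N) :
    Set.range (famF N l p q) ⊆ E1set N := by
  intro x hx
  rcases (famF_char N l p q hl x).mp hx with ⟨j, hj, _, rfl⟩ | rfl | rfl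
  · exact f_mem_E1 hj
  · exact e_mem_E1 hp
  · exact e_mem_E1 hq

lemma famG_sub (N b p q : ℕ) (hb : b < N) (hp : p = b ∨ p = b + 1)
    (hq1 : q ≠ b) (hq2 : q ≠ b + 1) (hq : q ≤ N) :
    Set.range (famG N b p q) ⊆ E1set N := by
  intro x hx
  rcases (famG_char N b p q hb hp hq1 hq2 hq x).mp hx with ⟨j, hj, _, _, rfl⟩ | rfl | rfl
  · exact e_mem_E1 hj
  · exact f_mem_E1 hb
  · exact z_mem_E1

lemma famH_sub (N m : ℕ) (hN : 1 ≤ N) (hm : m ≤ N) : Set.range (famH N m) ⊆ E1set N := by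
  intro x hx
  rcases (famH_char N m hN x).mp hx with ⟨j, _, hj, rfl⟩ | rfl | rfl
  · exact f_mem_E1 hj
  · exact e_mem_E1 hm
  · exact z_mem_E1

lemma famI_sub (N l p q : ℕ) (hl1 : 1 ≤ l) (hl : l < N) (hp : p ≤ N) (hq : q ≤ N) :
    Set.range (famI N l p q) ⊆ E1set N := by
  intro x hx
  rcases (famI_char N l p q hl1 hl x).mp hx with ⟨j, _, hj, _, rfl⟩ | rfl | rfl | rfl
  · exact f_mem_E1 hj
  · exact e_mem_E1 hp
  · exact e_mem_E1 hq
  · exact z_mem_E1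

@[reducible] def Conc (N : ℕ) (v w : Fin (N + 1) → ℝ) : Prop :=
  ∃ B₁ B₂ : Set (Fin (N + 1) → ℝ),
    B₁ ⊆ E1set N ∧ B₂ ⊆ E1set N ∧
    (LinearIndependent ℝ ((↑) : B₁ → (Fin (N + 1) → ℝ)) ∧ Submodule.span ℝ B₁ = ⊤) ∧
    (LinearIndependent ℝ ((↑) : B₂ → (Fin (N + 1) → ℝ)) ∧ Submodule.span ℝ B₂ = ⊤) ∧
    B₁ ∩ B₂ = {v} ∧ E1set N \ (B₁ ∪ B₂) = {w}

lemma case_ee (N k l : ℕ) (hN : 2 ≤ N) (hk : k ≤ N) (hl : l ≤ N) (hkl : k ≠ l) :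
    Conc N (stdv N k) (stdv N l) := by
  refine ⟨Set.range (famB N k), Set.range (famD N l), famB_sub N k hk, famD_sub N l hl,
    basisPair _ (famB_top N k hk), basisPair _ (famD_top N l hl), ?_, ?_⟩
  · refine Set.eq_singleton_iff_unique_mem.mpr ⟨⟨(famB_char N k _).mpr (Or.inr rfl),
      (famD_char N l hl _).mpr (Or.inl ⟨k, hk, hkl, rfl⟩)⟩, ?_⟩
    rintro x ⟨h1, h2⟩
    rw [famB_char] at h1
    rw [famD_char N l hl] at h2
    rcases h1 with ⟨j, hj, rfl⟩ | rfl
    · rcases h2 with ⟨j', hj', _, heq⟩ | heq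
      · exact absurd heq.symm (stdv_ne_fvec hj' hj)
      · exact absurd heq.symm (zeta1_ne_fvec hN hj)
    · rfl
  · ext x
    simp only [Set.mem_diff, Set.mem_union, Set.mem_singleton_iff]
    constructor
    · rintro ⟨hx, hB⟩
      push_neg at hB
      obtain ⟨h1, h2⟩ := hB
      rw [famB_char] at h1
      rw [famD_char N l hl] at h2
      push_neg at h1 h2
      rw [mem_E1_iff] at hx
      rcases hx with ⟨j, hj, rfl⟩ | ⟨j, hj, rfl⟩ | rfl
      · by_cases hjl : j = l
        · rw [hjl]
        · exact absurd rfl (h2.1 j hj hjl)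
      · exact absurd rfl (h1.1 j hj)
      · exact absurd rfl h2.2
    · rintro rfl
      refine ⟨e_mem_E1 hl, ?_⟩
      rintro (h | h)
      · rw [famB_char] at h
        rcases h with ⟨j, hj, heq⟩ | heq
        · exact stdv_ne_fvec hl hj heq
        · exact hkl (stdv_inj hl hk heq).symm
      · rw [famD_char N l hl] at h
        rcases h with ⟨j, hj, hne, heq⟩ | heq
        · exact hne (stdv_inj hl hj heq).symm
        · exact zeta1_ne_stdv (by omega) heq.symm

lemma case_ef_aux (N k l m p q : ℕ) (hN : 2 ≤ N) (hk : k ≤ N) (hl : l < N)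
    (hm : m ≤ N) (hmk : m ≠ k) (hpq : (p = k ∧ q = m) ∨ (p = m ∧ q = k))
    (hpl : p ≤ l) (hlq : l < q) (hqN : q ≤ N) :
    Conc N (stdv N k) (fvec N l) := by
  have hp : p ≤ N := by omega
  refine ⟨Set.range (famD N m), Set.range (famF N l p q), famD_sub N m hm,
    famF_sub N l p q hl hp hqN,
    basisPair _ (famD_top N m hm), basisPair _ (famF_top N l p q hpl hlq hqN), ?_, ?_⟩
  · refine Set.eq_singleton_iff_unique_mem.mpr ⟨⟨(famD_char N m hm _).mpr
      (Or.inl ⟨k, hk, fun h => hmk h.symm, rfl⟩), ?_⟩, ?_⟩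
    · rcases hpq with ⟨rfl, rfl⟩ | ⟨rfl, rfl⟩
      · exact (famF_char N l p q hl _).mpr (Or.inr (Or.inl rfl))
      · exact (famF_char N l p q hl _).mpr (Or.inr (Or.inr rfl))
    · rintro x ⟨h1, h2⟩
      rw [famD_char N m hm] at h1
      rw [famF_char N l p q hl] at h2
      rcases h1 with ⟨j, hj, hjm, rfl⟩ | rfl
      · rcases h2 with ⟨j', hj', _, heq⟩ | heq | heq
        · exact absurd heq (stdv_ne_fvec hj hj')
        · rcases hpq with ⟨rfl, rfl⟩ | ⟨rfl, rfl⟩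
          · exact heq
          · exact absurd (stdv_inj hj hm heq) hjm
        · rcases hpq with ⟨rfl, rfl⟩ | ⟨rfl, rfl⟩
          · exact absurd (stdv_inj hj hm heq) hjm
          · exact heq
      · rcases h2 with ⟨j', hj', _, heq⟩ | heq | heq
        · exact absurd heq.symm (zeta1_ne_fvec hN hj').symm
        · exact absurd heq.symm (zeta1_ne_stdv (by omega)).symm
        · exact absurd heq.symm (zeta1_ne_stdv (by omega)).symm
  · ext x
    simp only [Set.mem_diff, Set.mem_union, Set.mem_singleton_iff]
    constructor
    · rintro ⟨hx, hB⟩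
      push_neg at hB
      obtain ⟨h1, h2⟩ := hB
      rw [famD_char N m hm] at h1
      rw [famF_char N l p q hl] at h2
      push_neg at h1 h2
      rw [mem_E1_iff] at hx
      rcases hx with ⟨j, hj, rfl⟩ | ⟨j, hj, rfl⟩ | rfl
      · by_cases hjm : j = m
        · subst hjm
          rcases hpq with ⟨rfl, rfl⟩ | ⟨rfl, rfl⟩
          · exact absurd rfl h2.2.2
          · exact absurd rfl h2.2.1
        · exact absurd rfl (h1.1 j hj hjm)
      · by_cases hjl : j = l
        · rw [hjl]
        · exact absurd rfl (h2.1 j hj hjl)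
      · exact absurd rfl h1.2
    · rintro rfl
      refine ⟨f_mem_E1 hl, ?_⟩
      rintro (h | h)
      · rw [famD_char N m hm] at h
        rcases h with ⟨j, hj, _, heq⟩ | heq
        · exact stdv_ne_fvec hj hl heq.symm
        · exact zeta1_ne_fvec hN hl heq.symm
      · rw [famF_char N l p q hl] at h
        rcases h with ⟨j, hj, hne, heq⟩ | heq | heq
        · exact hne (fvec_inj hl hj heq).symm
        · exact stdv_ne_fvec hp hl heq.symm
        · exact stdv_ne_fvec hqN hl heq.symm

lemma case_ef (N k l : ℕ) (hN : 2 ≤ N) (hk : k ≤ N) (hl : l < N) :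
    Conc N (stdv N k) (fvec N l) := by
  rcases le_or_gt k l with h | h
  · exact case_ef_aux N k l (l + 1) k (l + 1) hN hk hl (by omega) (by omega)
      (Or.inl ⟨rfl, rfl⟩) h (by omega) (by omega)
  · exact case_ef_aux N k l l l k hN hk hl (by omega) (by omega)
      (Or.inr ⟨rfl, rfl⟩) (by omega) h hk

lemma case_ez (N k : ℕ) (hN : 2 ≤ N) (hk : k ≤ N) : Conc N (stdv N k) (zeta1 N) := by
  refine ⟨Set.range (famA N), Set.range (famB N k), famA_sub N, famB_sub N k hk,
    basisPair _ (famA_top N), basisPair _ (famB_top N k hk), ?_, ?_⟩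
  · refine Set.eq_singleton_iff_unique_mem.mpr ⟨⟨(famA_char N _).mpr ⟨k, hk, rfl⟩,
      (famB_char N k _).mpr (Or.inr rfl)⟩, ?_⟩
    rintro x ⟨h1, h2⟩
    rw [famA_char] at h1
    rw [famB_char] at h2
    obtain ⟨j, hj, rfl⟩ := h1
    rcases h2 with ⟨j', hj', heq⟩ | heq
    · exact absurd heq (stdv_ne_fvec hj hj')
    · exact heq
  · ext x
    simp only [Set.mem_diff, Set.mem_union, Set.mem_singleton_iff]
    constructor
    · rintro ⟨hx, hB⟩
      push_neg at hB
      obtain ⟨h1, h2⟩ := hB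
      rw [famA_char] at h1
      rw [famB_char] at h2
      push_neg at h1 h2
      rw [mem_E1_iff] at hx
      rcases hx with ⟨j, hj, rfl⟩ | ⟨j, hj, rfl⟩ | rfl
      · exact absurd rfl (h1 j hj)
      · exact absurd rfl (h2.1 j hj)
      · rfl
    · rintro rfl
      refine ⟨z_mem_E1, ?_⟩
      rintro (h | h)
      · rw [famA_char] at h
        obtain ⟨j, hj, heq⟩ := h
        exact zeta1_ne_stdv (by omega) heq
      · rw [famB_char] at h
        rcases h with ⟨j, hj, heq⟩ | heq
        · exact zeta1_ne_fvec hN hj heq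
        · exact zeta1_ne_stdv (by omega) heq

lemma case_fe_aux (N k l m p q : ℕ) (hN : 2 ≤ N) (hk : k < N) (hl : l ≤ N)
    (hm : m ≤ N) (hp : p = k ∨ p = k + 1) (hq1 : q ≠ k) (hq2 : q ≠ k + 1) (hqN : q ≤ N)
    (hlm : (p = l ∧ q = m) ∨ (p = m ∧ q = l)) :
    Conc N (fvec N k) (stdv N l) := by
  have hpq_ne : p ≠ q := by rcases hp with rfl | rfl <;> omega
  have hlm_ne : l ≠ m := by rcases hlm with ⟨h1, h2⟩ | ⟨h1, h2⟩ <;> omega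
  have hpN : p ≤ N := by rcases hp with rfl | rfl <;> omega
  have hGchar := famG_char N k p q hk hp hq1 hq2 hqN
  refine ⟨Set.range (famB N m), Set.range (famG N k p q), famB_sub N m hm,
    famG_sub N k p q hk hp hq1 hq2 hqN,
    basisPair _ (famB_top N m hm), basisPair _ (famG_top N k p q hk hp hq1 hq2 hqN), ?_, ?_⟩
  · refine Set.eq_singleton_iff_unique_mem.mpr ⟨⟨(famB_char N m _).mpr (Or.inl ⟨k, hk, rfl⟩),
      (hGchar _).mpr (Or.inr (Or.inl rfl))⟩, ?_⟩
    rintro x ⟨h1, h2⟩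
    rw [famB_char] at h1
    rw [hGchar] at h2
    rcases h1 with ⟨j, hj, rfl⟩ | rfl
    · rcases h2 with ⟨j', hj', _, _, heq⟩ | heq | heq
      · exact absurd heq.symm (stdv_ne_fvec hj' hj)
      · exact heq
      · exact absurd heq.symm (zeta1_ne_fvec hN hj)
    · rcases h2 with ⟨j', hj', hjp, hjq, heq⟩ | heq | heq
      · have h3 : m = j' := stdv_inj hm hj' heq
        rcases hlm with ⟨h4, h5⟩ | ⟨h4, h5⟩ <;> omega
      · exact absurd heq (stdv_ne_fvec hm hk)
      · exact absurd heq.symm (zeta1_ne_stdv (by omega))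
  · ext x
    simp only [Set.mem_diff, Set.mem_union, Set.mem_singleton_iff]
    constructor
    · rintro ⟨hx, hB⟩
      push_neg at hB
      obtain ⟨h1, h2⟩ := hB
      rw [famB_char] at h1
      rw [hGchar] at h2
      push_neg at h1 h2
      rw [mem_E1_iff] at hx
      rcases hx with ⟨j, hj, rfl⟩ | ⟨j, hj, rfl⟩ | rfl
      · by_cases hjl : j = l
        · rw [hjl]
        · by_cases hjm : j = m
          · subst hjm
            exact absurd rfl h1.2
          · have hjp : j ≠ p := by rcases hlm with ⟨h4, h5⟩ | ⟨h4, h5⟩ <;> omega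
            have hjq : j ≠ q := by rcases hlm with ⟨h4, h5⟩ | ⟨h4, h5⟩ <;> omega
            exact absurd rfl (h2.1 j hj hjp hjq)
      · exact absurd rfl (h1.1 j hj)
      · exact absurd rfl h2.2.2
    · rintro rfl
      refine ⟨e_mem_E1 hl, ?_⟩
      rintro (h | h)
      · rw [famB_char] at h
        rcases h with ⟨j, hj, heq⟩ | heq
        · exact stdv_ne_fvec hl hj heq
        · exact hlm_ne (stdv_inj hl hm heq)
      · rw [hGchar] at h
        rcases h with ⟨j, hj, hjp, hjq, heq⟩ | heq | heq
        · have h3 : l = j := stdv_inj hl hj heq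
          rcases hlm with ⟨h4, h5⟩ | ⟨h4, h5⟩ <;> omega
        · exact stdv_ne_fvec hl hk heq
        · exact zeta1_ne_stdv (by omega) heq.symm

lemma case_fe (N k l : ℕ) (hN : 2 ≤ N) (hk : k < N) (hl : l ≤ N) :
    Conc N (fvec N k) (stdv N l) := by
  by_cases hl' : l = k ∨ l = k + 1
  · by_cases hk0 : k = 0
    · exact case_fe_aux N k l 2 l 2 hN hk hl hN hl' (by omega) (by omega) hN
        (Or.inl ⟨rfl, rfl⟩)
    · exact case_fe_aux N k l 0 l 0 hN hk hl (by omega) hl' (by omega) (by omega) (by omega)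
        (Or.inl ⟨rfl, rfl⟩)
  · push_neg at hl'
    exact case_fe_aux N k l k k l hN hk hl (by omega) (Or.inl rfl) hl'.1 hl'.2 hl
      (Or.inr ⟨rfl, rfl⟩)

lemma case_ff_aux (N k l m p q : ℕ) (hN : 2 ≤ N) (hk : k < N) (hl : l < N) (hkl : k ≠ l)
    (hmN : m ≤ N) (hq1 : m ≠ k) (hq2 : m ≠ k + 1)
    (hpq : (p = k ∧ q = m) ∨ (p = m ∧ q = k)) (hpl : p ≤ l) (hlq : l < q) (hqN : q ≤ N) :
    Conc N (fvec N k) (fvec N l) := by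
  have hpN : p ≤ N := by omega
  have hGchar := famG_char N k k m hk (Or.inl rfl) hq1 hq2 hmN
  have hFchar := famF_char N l p q hl
  refine ⟨Set.range (famG N k k m), Set.range (famF N l p q),
    famG_sub N k k m hk (Or.inl rfl) hq1 hq2 hmN, famF_sub N l p q hl hpN hqN,
    basisPair _ (famG_top N k k m hk (Or.inl rfl) hq1 hq2 hmN),
    basisPair _ (famF_top N l p q hpl hlq hqN), ?_, ?_⟩
  · refine Set.eq_singleton_iff_unique_mem.mpr ⟨⟨(hGchar _).mpr (Or.inr (Or.inl rfl)),
      (hFchar _).mpr (Or.inl ⟨k, hk, hkl, rfl⟩)⟩, ?_⟩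
    rintro x ⟨h1, h2⟩
    rw [hGchar] at h1
    rw [hFchar] at h2
    rcases h1 with ⟨j, hj, hjk, hjm, rfl⟩ | rfl | rfl
    · rcases h2 with ⟨j', hj', _, heq⟩ | heq | heq
      · exact absurd heq (stdv_ne_fvec hj hj')
      · have h3 : j = p := stdv_inj hj hpN heq
        rcases hpq with ⟨h4, h5⟩ | ⟨h4, h5⟩ <;> omega
      · have h3 : j = q := stdv_inj hj hqN heq
        rcases hpq with ⟨h4, h5⟩ | ⟨h4, h5⟩ <;> omega
    · rfl
    · rcases h2 with ⟨j', hj', _, heq⟩ | heq | heq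
      · exact absurd heq (zeta1_ne_fvec hN hj')
      · exact absurd heq (zeta1_ne_stdv (by omega))
      · exact absurd heq (zeta1_ne_stdv (by omega))
  · ext x
    simp only [Set.mem_diff, Set.mem_union, Set.mem_singleton_iff]
    constructor
    · rintro ⟨hx, hB⟩
      push_neg at hB
      obtain ⟨h1, h2⟩ := hB
      rw [hGchar] at h1
      rw [hFchar] at h2
      push_neg at h1 h2
      rw [mem_E1_iff] at hx
      rcases hx with ⟨j, hj, rfl⟩ | ⟨j, hj, rfl⟩ | rfl
      · by_cases hjk : j = k
        · subst hjk
          rcases hpq with ⟨rfl, -⟩ | ⟨-, rfl⟩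
          · exact absurd rfl h2.2.1
          · exact absurd rfl h2.2.2
        · by_cases hjm : j = m
          · subst hjm
            rcases hpq with ⟨-, rfl⟩ | ⟨rfl, -⟩
            · exact absurd rfl h2.2.2
            · exact absurd rfl h2.2.1
          · exact absurd rfl (h1.1 j hj hjk hjm)
      · by_cases hjl : j = l
        · rw [hjl]
        · by_cases hjk : j = k
          · subst hjk
            exact absurd rfl h1.2.1
          · exact absurd rfl (h2.1 j hj hjl)
      · exact absurd rfl h1.2.2
    · rintro rfl
      refine ⟨f_mem_E1 hl, ?_⟩
      rintro (h | h)
      · rw [hGchar] at h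
        rcases h with ⟨j, hj, _, _, heq⟩ | heq | heq
        · exact stdv_ne_fvec hj hl heq.symm
        · exact hkl (fvec_inj hl hk heq).symm
        · exact zeta1_ne_fvec hN hl heq.symm
      · rw [hFchar] at h
        rcases h with ⟨j, hj, hne, heq⟩ | heq | heq
        · exact hne (fvec_inj hl hj heq).symm
        · exact stdv_ne_fvec hpN hl heq.symm
        · exact stdv_ne_fvec hqN hl heq.symm

lemma case_ff (N k l : ℕ) (hN : 2 ≤ N) (hk : k < N) (hl : l < N) (hkl : k ≠ l) :
    Conc N (fvec N k) (fvec N l) := by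
  rcases Nat.lt_or_ge k l with h | h
  · exact case_ff_aux N k l (l + 1) k (l + 1) hN hk hl hkl (by omega) (by omega) (by omega)
      (Or.inl ⟨rfl, rfl⟩) (by omega) (by omega) (by omega)
  · have h' : l < k := by omega
    exact case_ff_aux N k l l l k hN hk hl hkl (by omega) (by omega) (by omega)
      (Or.inr ⟨rfl, rfl⟩) (by omega) h' (by omega)

lemma case_fz (N k : ℕ) (hN : 2 ≤ N) (hk : k < N) : Conc N (fvec N k) (zeta1 N) := by
  have hkN : k ≤ N := by omega
  have hCchar := famC_char N k hk
  refine ⟨Set.range (famB N k), Set.range (famC N k), famB_sub N k hkN, famC_sub N k hk,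
    basisPair _ (famB_top N k hkN), basisPair _ (famC_top N k hk), ?_, ?_⟩
  · refine Set.eq_singleton_iff_unique_mem.mpr ⟨⟨(famB_char N k _).mpr (Or.inl ⟨k, hk, rfl⟩),
      (hCchar _).mpr (Or.inr rfl)⟩, ?_⟩
    rintro x ⟨h1, h2⟩
    rw [famB_char] at h1
    rw [hCchar] at h2
    rcases h1 with ⟨j, hj, rfl⟩ | rfl
    · rcases h2 with ⟨j', hj', _, heq⟩ | heq
      · exact absurd heq.symm (stdv_ne_fvec hj' hj)
      · exact heq
    · rcases h2 with ⟨j', hj', hne, heq⟩ | heq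
      · exact absurd (stdv_inj hkN hj' heq) (fun h => hne h.symm)
      · exact absurd heq (stdv_ne_fvec hkN hk)
  · ext x
    simp only [Set.mem_diff, Set.mem_union, Set.mem_singleton_iff]
    constructor
    · rintro ⟨hx, hB⟩
      push_neg at hB
      obtain ⟨h1, h2⟩ := hB
      rw [famB_char] at h1
      rw [hCchar] at h2
      push_neg at h1 h2
      rw [mem_E1_iff] at hx
      rcases hx with ⟨j, hj, rfl⟩ | ⟨j, hj, rfl⟩ | rfl
      · by_cases hjk : j = k
        · subst hjk
          exact absurd rfl h1.2
        · exact absurd rfl (h2.1 j hj hjk)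
      · exact absurd rfl (h1.1 j hj)
      · rfl
    · rintro rfl
      refine ⟨z_mem_E1, ?_⟩
      rintro (h | h)
      · rw [famB_char] at h
        rcases h with ⟨j, hj, heq⟩ | heq
        · exact zeta1_ne_fvec hN hj heq
        · exact zeta1_ne_stdv (by omega) heq
      · rw [hCchar] at h
        rcases h with ⟨j, hj, _, heq⟩ | heq
        · exact zeta1_ne_stdv (by omega) heq
        · exact zeta1_ne_fvec hN hk heq

lemma case_ze_aux (N l m p q : ℕ) (hN : 2 ≤ N) (hl : l ≤ N)
    (hm1 : 1 ≤ m) (hmN : m ≤ N) (hp : p = 0 ∨ p = 0 + 1) (hq1 : q ≠ 0) (hq2 : q ≠ 0 + 1)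
    (hqN : q ≤ N) (hlm : (p = l ∧ q = m) ∨ (p = m ∧ q = l)) :
    Conc N (zeta1 N) (stdv N l) := by
  have hb : 0 < N := by omega
  have hpq_ne : p ≠ q := by omega
  have hlm_ne : l ≠ m := by rcases hlm with ⟨h1, h2⟩ | ⟨h1, h2⟩ <;> omega
  have hGchar := famG_char N 0 p q hb hp hq1 hq2 hqN
  have hHchar := famH_char N m (by omega)
  refine ⟨Set.range (famG N 0 p q), Set.range (famH N m),
    famG_sub N 0 p q hb hp hq1 hq2 hqN, famH_sub N m (by omega) hmN,
    basisPair _ (famG_top N 0 p q hb hp hq1 hq2 hqN),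
    basisPair _ (famH_top N m hm1 hmN), ?_, ?_⟩
  · refine Set.eq_singleton_iff_unique_mem.mpr ⟨⟨(hGchar _).mpr (Or.inr (Or.inr rfl)),
      (hHchar _).mpr (Or.inr (Or.inr rfl))⟩, ?_⟩
    rintro x ⟨h1, h2⟩
    rw [hGchar] at h1
    rw [hHchar] at h2
    rcases h1 with ⟨j, hj, hjp, hjq, rfl⟩ | rfl | rfl
    · rcases h2 with ⟨j', hj1, hj2, heq⟩ | heq | heq
      · exact absurd heq (stdv_ne_fvec hj hj2)
      · have h3 : j = m := stdv_inj hj hmN heq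
        rcases hlm with ⟨h4, h5⟩ | ⟨h4, h5⟩ <;> omega
      · exact absurd heq.symm (zeta1_ne_stdv (by omega))
    · rcases h2 with ⟨j', hj1, hj2, heq⟩ | heq | heq
      · exact absurd (fvec_inj hb hj2 heq) (by omega)
      · exact absurd heq.symm (stdv_ne_fvec hmN hb)
      · exact absurd heq.symm (zeta1_ne_fvec hN hb)
    · rfl
  · ext x
    simp only [Set.mem_diff, Set.mem_union, Set.mem_singleton_iff]
    constructor
    · rintro ⟨hx, hB⟩
      push_neg at hB
      obtain ⟨h1, h2⟩ := hB
      rw [hGchar] at h1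
      rw [hHchar] at h2
      push_neg at h1 h2
      rw [mem_E1_iff] at hx
      rcases hx with ⟨j, hj, rfl⟩ | ⟨j, hj, rfl⟩ | rfl
      · by_cases hjl : j = l
        · rw [hjl]
        · by_cases hjm : j = m
          · subst hjm
            exact absurd rfl h2.2.1
          · have hjp : j ≠ p := by rcases hlm with ⟨h4, h5⟩ | ⟨h4, h5⟩ <;> omega
            have hjq : j ≠ q := by rcases hlm with ⟨h4, h5⟩ | ⟨h4, h5⟩ <;> omega
            exact absurd rfl (h1.1 j hj hjp hjq)
      · by_cases hj0 : j = 0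
        · subst hj0
          exact absurd rfl h1.2.1
        · exact absurd rfl (h2.1 j (by omega) hj)
      · exact absurd rfl h1.2.2
    · rintro rfl
      refine ⟨e_mem_E1 hl, ?_⟩
      rintro (h | h)
      · rw [hGchar] at h
        rcases h with ⟨j, hj, hjp, hjq, heq⟩ | heq | heq
        · have h3 : l = j := stdv_inj hl hj heq
          rcases hlm with ⟨h4, h5⟩ | ⟨h4, h5⟩ <;> omega
        · exact stdv_ne_fvec hl hb heq
        · exact zeta1_ne_stdv (by omega) heq.symm
      · rw [hHchar] at h
        rcases h with ⟨j, hj1, hj2, heq⟩ | heq | heq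
        · exact stdv_ne_fvec hl hj2 heq
        · exact hlm_ne (stdv_inj hl hmN heq)
        · exact zeta1_ne_stdv (by omega) heq.symm

lemma case_ze (N l : ℕ) (hN : 2 ≤ N) (hl : l ≤ N) : Conc N (zeta1 N) (stdv N l) := by
  by_cases hl1 : l ≤ 1
  · exact case_ze_aux N l 2 l 2 hN hl (by omega) hN (by omega) (by omega) (by omega) hN
      (Or.inl ⟨rfl, rfl⟩)
  · exact case_ze_aux N l 1 1 l hN hl (by omega) (by omega) (by omega) (by omega) (by omega)
      hl (Or.inr ⟨rfl, rfl⟩)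

lemma case_zf0 (N : ℕ) (hN : 2 ≤ N) : Conc N (zeta1 N) (fvec N 0) := by
  have h0 : (0 : ℕ) < N := by omega
  have h1N : (1 : ℕ) ≤ N := by omega
  have hDchar := famD_char N 1 h1N
  have hHchar := famH_char N 1 h1N
  refine ⟨Set.range (famD N 1), Set.range (famH N 1), famD_sub N 1 h1N,
    famH_sub N 1 h1N h1N,
    basisPair _ (famD_top N 1 h1N), basisPair _ (famH_top N 1 le_rfl h1N), ?_, ?_⟩
  · refine Set.eq_singleton_iff_unique_mem.mpr ⟨⟨(hDchar _).mpr (Or.inr rfl),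
      (hHchar _).mpr (Or.inr (Or.inr rfl))⟩, ?_⟩
    rintro x ⟨h1, h2⟩
    rw [hDchar] at h1
    rw [hHchar] at h2
    rcases h1 with ⟨j, hj, hj1, rfl⟩ | rfl
    · rcases h2 with ⟨j', hja, hjb, heq⟩ | heq | heq
      · exact absurd heq (stdv_ne_fvec hj hjb)
      · exact absurd (stdv_inj hj h1N heq) hj1
      · exact absurd heq.symm (zeta1_ne_stdv (by omega))
    · rfl
  · ext x
    simp only [Set.mem_diff, Set.mem_union, Set.mem_singleton_iff]
    constructor
    · rintro ⟨hx, hB⟩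
      push_neg at hB
      obtain ⟨h1, h2⟩ := hB
      rw [hDchar] at h1
      rw [hHchar] at h2
      push_neg at h1 h2
      rw [mem_E1_iff] at hx
      rcases hx with ⟨j, hj, rfl⟩ | ⟨j, hj, rfl⟩ | rfl
      · by_cases hj1 : j = 1
        · subst hj1
          exact absurd rfl h2.2.1
        · exact absurd rfl (h1.1 j hj hj1)
      · by_cases hj0 : j = 0
        · rw [hj0]
        · exact absurd rfl (h2.1 j (by omega) hj)
      · exact absurd rfl h1.2
    · rintro rfl
      refine ⟨f_mem_E1 h0, ?_⟩
      rintro (h | h)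
      · rw [hDchar] at h
        rcases h with ⟨j, hj, _, heq⟩ | heq
        · exact stdv_ne_fvec hj h0 heq.symm
        · exact zeta1_ne_fvec hN h0 heq.symm
      · rw [hHchar] at h
        rcases h with ⟨j, hja, hjb, heq⟩ | heq | heq
        · exact absurd (fvec_inj h0 hjb heq) (by omega)
        · exact stdv_ne_fvec h1N h0 heq.symm
        · exact zeta1_ne_fvec hN h0 heq.symm

lemma case_zf1 (N l : ℕ) (hN : 2 ≤ N) (hl1 : 1 ≤ l) (hl : l < N) :
    Conc N (zeta1 N) (fvec N l) := by
  have hb : (0 : ℕ) < N := by omega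
  have h1N : (1 : ℕ) ≤ N := by omega
  have hlN : l + 1 ≤ N := by omega
  have hGchar := famG_char N 0 1 (l + 1) hb (Or.inr rfl) (by omega) (by omega) hlN
  have hIchar := famI_char N l 1 (l + 1) hl1 hl
  refine ⟨Set.range (famG N 0 1 (l + 1)), Set.range (famI N l 1 (l + 1)),
    famG_sub N 0 1 (l + 1) hb (Or.inr rfl) (by omega) (by omega) hlN,
    famI_sub N l 1 (l + 1) hl1 hl h1N hlN,
    basisPair _ (famG_top N 0 1 (l + 1) hb (Or.inr rfl) (by omega) (by omega) hlN),
    basisPair _ (famI_top N l 1 (l + 1) le_rfl hl1 (by omega) hlN), ?_, ?_⟩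
  · refine Set.eq_singleton_iff_unique_mem.mpr ⟨⟨(hGchar _).mpr (Or.inr (Or.inr rfl)),
      (hIchar _).mpr (Or.inr (Or.inr (Or.inr rfl)))⟩, ?_⟩
    rintro x ⟨h1, h2⟩
    rw [hGchar] at h1
    rw [hIchar] at h2
    rcases h1 with ⟨j, hj, hja, hjb, rfl⟩ | rfl | rfl
    · rcases h2 with ⟨j', hj1, hj2, _, heq⟩ | heq | heq | heq
      · exact absurd heq (stdv_ne_fvec hj hj2)
      · exact absurd (stdv_inj hj h1N heq) hja
      · exact absurd (stdv_inj hj hlN heq) hjb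
      · exact absurd heq.symm (zeta1_ne_stdv (by omega))
    · rcases h2 with ⟨j', hj1, hj2, _, heq⟩ | heq | heq | heq
      · exact absurd (fvec_inj hb hj2 heq) (by omega)
      · exact absurd heq.symm (stdv_ne_fvec h1N hb)
      · exact absurd heq.symm (stdv_ne_fvec hlN hb)
      · exact absurd heq.symm (zeta1_ne_fvec hN hb)
    · rfl
  · ext x
    simp only [Set.mem_diff, Set.mem_union, Set.mem_singleton_iff]
    constructor
    · rintro ⟨hx, hB⟩
      push_neg at hB
      obtain ⟨h1, h2⟩ := hB
      rw [hGchar] at h1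
      rw [hIchar] at h2
      push_neg at h1 h2
      rw [mem_E1_iff] at hx
      rcases hx with ⟨j, hj, rfl⟩ | ⟨j, hj, rfl⟩ | rfl
      · by_cases hja : j = 1
        · subst hja
          exact absurd rfl h2.2.1
        · by_cases hjb : j = l + 1
          · subst hjb
            exact absurd rfl h2.2.2.1
          · exact absurd rfl (h1.1 j hj hja hjb)
      · by_cases hjl : j = l
        · rw [hjl]
        · by_cases hj0 : j = 0
          · subst hj0
            exact absurd rfl h1.2.1
          · exact absurd rfl (h2.1 j (by omega) hj hjl)
      · exact absurd rfl h1.2.2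
    · rintro rfl
      refine ⟨f_mem_E1 hl, ?_⟩
      rintro (h | h)
      · rw [hGchar] at h
        rcases h with ⟨j, hj, _, _, heq⟩ | heq | heq
        · exact stdv_ne_fvec hj hl heq.symm
        · exact absurd (fvec_inj hl hb heq) (by omega)
        · exact zeta1_ne_fvec hN hl heq.symm
      · rw [hIchar] at h
        rcases h with ⟨j, hj1, hj2, hne, heq⟩ | heq | heq | heq
        · exact hne (fvec_inj hl hj2 heq).symm
        · exact stdv_ne_fvec h1N hl heq.symm
        · exact stdv_ne_fvec hlN hl heq.symm
        · exact zeta1_ne_fvec hN hl heq.symm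

/-- For every pair of distinct vectors `(v,w)` from `E₁` (with `N ≥ 2`) there are two
bases `B₁, B₂ ⊆ E₁` of `ℝ^{N+1}` with `B₁ ∩ B₂ = {v}` and `E₁ \ (B₁ ∪ B₂) = {w}`. -/
theorem E1_basis_pairs (N : ℕ) (hN : 2 ≤ N) (v w : Fin (N + 1) → ℝ)
    (hv : v ∈ E1set N) (hw : w ∈ E1set N) (hvw : v ≠ w) :
    ∃ B₁ B₂ : Set (Fin (N + 1) → ℝ),
      B₁ ⊆ E1set N ∧ B₂ ⊆ E1set N ∧
      (LinearIndependent ℝ ((↑) : B₁ → (Fin (N + 1) → ℝ)) ∧ Submodule.span ℝ B₁ = ⊤) ∧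
      (LinearIndependent ℝ ((↑) : B₂ → (Fin (N + 1) → ℝ)) ∧ Submodule.span ℝ B₂ = ⊤) ∧
      B₁ ∩ B₂ = {v} ∧ E1set N \ (B₁ ∪ B₂) = {w} := by
  rw [mem_E1_iff] at hv hw
  rcases hv with ⟨k, hk, rfl⟩ | ⟨k, hk, rfl⟩ | rfl <;>
    rcases hw with ⟨l, hl, rfl⟩ | ⟨l, hl, rfl⟩ | rfl
  · exact case_ee N k l hN hk hl (fun h => hvw (by rw [h]))
  · exact case_ef N k l hN hk hl
  · exact case_ez N k hN hk
  · exact case_fe N k l hN hk hl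
  · exact case_ff N k l hN hk hl (fun h => hvw (by rw [h]))
  · exact case_fz N k hN hk
  · exact case_ze N l hN hl
  · by_cases hl1 : 1 ≤ l
    · exact case_zf1 N l hN hl1 hl
    · have h0 : l = 0 := by omega
      subst h0
      exact case_zf0 N hN
  · exact absurd rfl hvw
end

section
/- Let $E \subset \mathbb{R}^{n}$ be a finite set of vectors and suppose that for every pair of distinct $v, w \in E$ there exist bases $B_1, B_2 \subset E$ of $\mathbb{R}^n$ with $B_1 \cap B_2 = \{v\}$ and $E \setminus (B_1 \cup B_2) = \{w\}$. Then the set $A = \{\theta : E \to [0,1] \mid \sum_{v \in E} |\theta(v) - 1/2| \le 1 \text{ and } \sum_{v \in E} \theta(v) = n\}$ is contained in the matroid polytope $\mathcal{P}(E)$, defined as the convex hull of $\{\chi_B : B \subset E \text{ is a basis of } \mathbb{R}^n\}$. -/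
open Finset

variable (n : ℕ)

/-- `B` is a basis of `ℝ^n` (a linearly independent spanning set). -/
def IsBasisSet (B : Finset (Fin n → ℝ)) : Prop :=
  LinearIndependent ℝ (fun x : (B : Set (Fin n → ℝ)) => (x : Fin n → ℝ)) ∧
    Submodule.span ℝ (B : Set (Fin n → ℝ)) = ⊤

/-- The indicator function of `B` viewed as an element of `E → ℝ`. -/
noncomputable def chiB (E B : Finset (Fin n → ℝ)) : E → ℝ :=
  fun v => if (v : Fin n → ℝ) ∈ B then 1 else 0

/-- If for every pair of distinct `v, w ∈ E` there are bases `B₁, B₂ ⊆ E` with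
`B₁ ∩ B₂ = {v}` and `E \ (B₁ ∪ B₂) = {w}` (and `|E| = 2n`), then the set
`A = {θ : E → [0,1] : ∑ |θ(v) - 1/2| ≤ 1, ∑ θ(v) = n}` is contained in the matroid
polytope `𝒫(E)`, the convex hull of the indicators of bases contained in `E`. -/
theorem A_subset_matroid_polytope (E : Finset (Fin n → ℝ)) (hcard : E.card = 2 * n)
    (hpairs : ∀ v ∈ E, ∀ w ∈ E, v ≠ w →
      ∃ B₁ B₂ : Finset (Fin n → ℝ), B₁ ⊆ E ∧ B₂ ⊆ E ∧
        IsBasisSet n B₁ ∧ IsBasisSet n B₂ ∧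
        B₁ ∩ B₂ = {v} ∧ E \ (B₁ ∪ B₂) = {w}) :
    {θ : E → ℝ | (∀ v, θ v ∈ Set.Icc (0 : ℝ) 1) ∧
        (∑ v : E, |θ v - 1 / 2| ≤ 1) ∧ (∑ v : E, θ v = n)}
      ⊆ convexHull ℝ
          {χ : E → ℝ | ∃ B : Finset (Fin n → ℝ), B ⊆ E ∧ IsBasisSet n B ∧ χ = chiB n E B} := by
  intro θ hθ
  obtain ⟨hθ01, hθabs, hθsum⟩ := hθ
  set S : Set (E → ℝ) :=
    {χ : E → ℝ | ∃ B : Finset (Fin n → ℝ), B ⊆ E ∧ IsBasisSet n B ∧ χ = chiB n E B} with hSdef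
  rcases Nat.eq_zero_or_pos n with hn | hn
  · -- n = 0 : E is empty and the empty set is a basis
    subst hn
    have hE : E = ∅ := Finset.card_eq_zero.mp (by simpa using hcard)
    apply subset_convexHull
    refine ⟨∅, by simp, ⟨?_, ?_⟩, ?_⟩
    · haveI : IsEmpty ((∅ : Finset (Fin 0 → ℝ)) : Set (Fin 0 → ℝ)) := by
        simp
      exact linearIndependent_empty_type
    · exact Subsingleton.elim _ _
    · funext u
      exact absurd u.2 (by simp [hE])
  -- main case : n ≥ 1
  -- the key functions Φ_{v,w}
  have key : ∀ v w : E, v ≠ w → ∃ Φ : E → ℝ, Φ ∈ convexHull ℝ S ∧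
      ∀ u : E, Φ u = 1/2 + (if u = v then (1:ℝ) else 0)/2 - (if u = w then (1:ℝ) else 0)/2 := by
    intro v w hvw
    have hvw' : (v : Fin n → ℝ) ≠ (w : Fin n → ℝ) := Subtype.val_injective.ne hvw
    obtain ⟨B₁, B₂, hB₁E, hB₂E, hb1, hb2, hinter, hdiff⟩ := hpairs v v.2 w w.2 hvw'
    have hχ₁ : chiB n E B₁ ∈ S := ⟨B₁, hB₁E, hb1, rfl⟩
    have hχ₂ : chiB n E B₂ ∈ S := ⟨B₂, hB₂E, hb2, rfl⟩
    refine ⟨(1/2 : ℝ) • chiB n E B₁ + (1/2 : ℝ) • chiB n E B₂, ?_, ?_⟩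
    · exact (convex_convexHull ℝ S) (subset_convexHull ℝ S hχ₁) (subset_convexHull ℝ S hχ₂)
        (by norm_num) (by norm_num) (by norm_num)
    · intro u
      have hv : (v : Fin n → ℝ) ∈ B₁ ∩ B₂ := by
        rw [hinter]; exact Finset.mem_singleton_self _
      have hw : (w : Fin n → ℝ) ∈ E \ (B₁ ∪ B₂) := by
        rw [hdiff]; exact Finset.mem_singleton_self _
      have hv₁ : (v : Fin n → ℝ) ∈ B₁ := (Finset.mem_inter.mp hv).1
      have hv₂ : (v : Fin n → ℝ) ∈ B₂ := (Finset.mem_inter.mp hv).2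
      have hw' : (w : Fin n → ℝ) ∉ B₁ ∪ B₂ := (Finset.mem_sdiff.mp hw).2
      simp only [Pi.add_apply, Pi.smul_apply, smul_eq_mul, chiB]
      by_cases huv : u = v
      · subst huv
        simp [hv₁, hv₂, hvw]
      · by_cases huw : u = w
        · subst huw
          have h1 : (u : Fin n → ℝ) ∉ B₁ := fun h => hw' (Finset.mem_union_left _ h)
          have h2 : (u : Fin n → ℝ) ∉ B₂ := fun h => hw' (Finset.mem_union_right _ h)
          simp [h1, h2, huv]
        · -- u distinct from both : u in exactly one of B₁, B₂
          have humem : (u : Fin n → ℝ) ∈ B₁ ∪ B₂ := by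
            by_contra hcon
            have : (u : Fin n → ℝ) ∈ E \ (B₁ ∪ B₂) := Finset.mem_sdiff.mpr ⟨u.2, hcon⟩
            rw [hdiff, Finset.mem_singleton] at this
            exact huw (Subtype.ext this)
          have hunot : (u : Fin n → ℝ) ∉ B₁ ∩ B₂ := by
            intro hcon
            rw [hinter, Finset.mem_singleton] at hcon
            exact huv (Subtype.ext hcon)
          by_cases h1 : (u : Fin n → ℝ) ∈ B₁
          · have h2 : (u : Fin n → ℝ) ∉ B₂ := fun h => hunot (Finset.mem_inter.mpr ⟨h1, h⟩)
            simp [h1, h2, huv, huw]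
          · have h2 : (u : Fin n → ℝ) ∈ B₂ := (Finset.mem_union.mp humem).resolve_left h1
            simp [h1, h2, huv, huw]
  choose Φf hΦmem hΦval using key
  -- the constant function 1/2 is in the hull
  have htwo : 1 < E.card := by omega
  obtain ⟨a, ha, b, hb, hab⟩ := Finset.one_lt_card.mp htwo
  have hc : (fun _ : E => (1/2 : ℝ)) ∈ convexHull ℝ S := by
    set v : E := ⟨a, ha⟩
    set w : E := ⟨b, hb⟩
    have hvw : v ≠ w := fun h => hab (congrArg Subtype.val h)
    have hvw' : w ≠ v := fun h => hab (congrArg Subtype.val h).symm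
    have heq : (fun _ : E => (1/2 : ℝ)) = (1/2 : ℝ) • Φf v w hvw + (1/2 : ℝ) • Φf w v hvw' := by
      funext u
      simp only [Pi.add_apply, Pi.smul_apply, smul_eq_mul]
      rw [hΦval v w hvw u, hΦval w v hvw' u]
      ring
    rw [heq]
    exact (convex_convexHull ℝ S) (hΦmem v w hvw) (hΦmem w v hvw')
      (by norm_num) (by norm_num) (by norm_num)
  -- positive and negative parts
  set p : E → ℝ := fun v => max (θ v - 1/2) 0 with hpdef
  set m : E → ℝ := fun v => max (1/2 - θ v) 0 with hmdef
  have hp0 : ∀ v, 0 ≤ p v := fun v => le_max_right _ _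
  have hm0 : ∀ v, 0 ≤ m v := fun v => le_max_right _ _
  have hpm : ∀ v, p v - m v = θ v - 1/2 := by
    intro v
    rcases le_total (θ v) (1/2) with h | h
    · simp only [hpdef, hmdef]
      rw [max_eq_right (by linarith), max_eq_left (by linarith)]
      ring
    · simp only [hpdef, hmdef]
      rw [max_eq_left (by linarith), max_eq_right (by linarith)]
      ring
  have habs : ∀ v, p v + m v = |θ v - 1/2| := by
    intro v
    rcases le_total (θ v) (1/2) with h | h
    · simp only [hpdef, hmdef]
      rw [max_eq_right (by linarith), max_eq_left (by linarith), abs_of_nonpos (by linarith)]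
      ring
    · simp only [hpdef, hmdef]
      rw [max_eq_left (by linarith), max_eq_right (by linarith), abs_of_nonneg (by linarith)]
      ring
  have hmul : ∀ v, p v * m v = 0 := by
    intro v
    rcases le_total (θ v) (1/2) with h | h
    · simp only [hpdef]
      rw [max_eq_right (by linarith), zero_mul]
    · simp only [hmdef]
      rw [max_eq_right (by linarith), mul_zero]
  set s : ℝ := ∑ v : E, p v with hsdef
  have hs0 : 0 ≤ s := Finset.sum_nonneg fun v _ => hp0 v
  have hcardE : ((Fintype.card E : ℕ) : ℝ) = 2 * n := by
    rw [Fintype.card_coe, hcard]; push_cast; ring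
  have hq0 : ∑ v : E, (θ v - 1/2) = 0 := by
    rw [Finset.sum_sub_distrib, hθsum, Finset.sum_const, Finset.card_univ, nsmul_eq_mul, hcardE]
    ring
  have hsm : ∑ v : E, m v = s := by
    have h1 : ∑ v : E, (p v - m v) = 0 := by
      rw [Finset.sum_congr rfl fun v _ => hpm v]; exact hq0
    rw [Finset.sum_sub_distrib] at h1
    linarith [h1]
  have h2s : 2 * s ≤ 1 := by
    have h1 : ∑ v : E, (p v + m v) = 2 * s := by
      rw [Finset.sum_add_distrib, hsm]; ring
    have h2 : ∑ v : E, (p v + m v) ≤ 1 := by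
      rw [Finset.sum_congr rfl fun v _ => habs v]; exact hθabs
    linarith
  rcases eq_or_lt_of_le hs0 with hs | hs
  · -- s = 0 : θ is constant 1/2
    have hps : ∀ v ∈ Finset.univ, p v = 0 :=
      (Finset.sum_eq_zero_iff_of_nonneg fun v _ => hp0 v).mp hs.symm
    have hms : ∀ v ∈ Finset.univ, m v = 0 :=
      (Finset.sum_eq_zero_iff_of_nonneg fun v _ => hm0 v).mp (by rw [hsm]; exact hs.symm)
    have hθc : θ = fun _ : E => (1/2 : ℝ) := by
      funext v
      have := hpm v
      rw [hps v (Finset.mem_univ v), hms v (Finset.mem_univ v)] at this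
      linarith
    rw [hθc]
    exact hc
  · -- s > 0 : main convex combination
    have hsne : s ≠ 0 := ne_of_gt hs
    set Z : E × E → (E → ℝ) := fun vw =>
      if h : vw.1 = vw.2 then (fun _ : E => (1/2 : ℝ)) else Φf vw.1 vw.2 h with hZdef
    have hZmem : ∀ vw : E × E, Z vw ∈ convexHull ℝ S := by
      intro vw
      by_cases h : vw.1 = vw.2
      · simp only [hZdef, dif_pos h]; exact hc
      · simp only [hZdef, dif_neg h]; exact hΦmem _ _ h
    set y : E → ℝ := ∑ vw : E × E, (p vw.1 * m vw.2 / s^2) • Z vw with hydef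
    have hsp : ∑ v : E, p v = s := hsdef.symm
    have hysum : ∑ vw : E × E, p vw.1 * m vw.2 / s^2 = 1 := by
      rw [← Finset.sum_div, Fintype.sum_prod_type]
      dsimp only
      simp_rw [← Finset.mul_sum, hsm, ← Finset.sum_mul, hsp]
      field_simp
    have hymem : y ∈ convexHull ℝ S := by
      rw [hydef]
      exact (convex_convexHull ℝ S).sum_mem
        (fun vw _ => div_nonneg (mul_nonneg (hp0 _) (hm0 _)) (sq_nonneg s))
        hysum (fun vw _ => hZmem vw)
    have hθeq : θ = (1 - 2*s) • (fun _ : E => (1/2 : ℝ)) + (2*s) • y := by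
      funext u
      simp only [Pi.add_apply, Pi.smul_apply, smul_eq_mul, hydef, Finset.sum_apply]
      have hterm : ∀ vw ∈ (Finset.univ : Finset (E × E)),
          (p vw.1 * m vw.2 / s^2) * Z vw u
          = (p vw.1 * m vw.2 / 2 + (if u = vw.1 then (1:ℝ) else 0) * (p vw.1 * m vw.2) / 2
              - (if u = vw.2 then (1:ℝ) else 0) * (p vw.1 * m vw.2) / 2) / s^2 := by
        rintro ⟨v, w⟩ -
        by_cases h0 : p v * m w = 0
        · simp only [h0]
          simp
        · have hvw : v ≠ w := by
            intro h
            subst h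
            exact h0 (hmul v)
          simp only [hZdef, dif_neg hvw]
          rw [hΦval v w hvw u]
          ring
      rw [Finset.sum_congr rfl hterm, ← Finset.sum_div]
      have hsplit : ∑ vw : E × E,
          (p vw.1 * m vw.2 / 2 + (if u = vw.1 then (1:ℝ) else 0) * (p vw.1 * m vw.2) / 2
            - (if u = vw.2 then (1:ℝ) else 0) * (p vw.1 * m vw.2) / 2)
          = s * s / 2 + p u * s / 2 - s * m u / 2 := by
        rw [Finset.sum_sub_distrib, Finset.sum_add_distrib]
        have h1 : ∑ vw : E × E, p vw.1 * m vw.2 / 2 = s * s / 2 := by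
          rw [← Finset.sum_div, Fintype.sum_prod_type]
          dsimp only
          simp_rw [← Finset.mul_sum, hsm, ← Finset.sum_mul]
          rw [hsp]
        have h2 : ∑ vw : E × E, (if u = vw.1 then (1:ℝ) else 0) * (p vw.1 * m vw.2) / 2
            = p u * s / 2 := by
          rw [← Finset.sum_div, Fintype.sum_prod_type]
          dsimp only
          rw [Finset.sum_eq_single u (fun b _ hb => by simp [Ne.symm hb]) (by simp)]
          simp only [if_pos rfl, one_mul]
          rw [if_pos trivial]
          simp_rw [one_mul]
          rw [← Finset.mul_sum, hsm]
        have h3 : ∑ vw : E × E, (if u = vw.2 then (1:ℝ) else 0) * (p vw.1 * m vw.2) / 2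
            = s * m u / 2 := by
          rw [← Finset.sum_div, Fintype.sum_prod_type]
          dsimp only
          rw [Finset.sum_comm]
          have hre : ∀ w v : E, (if u = w then (1:ℝ) else 0) * (p v * m w)
              = p v * ((if u = w then (1:ℝ) else 0) * m w) := by
            intro w v; ring
          have hmu : ∑ w : E, (if u = w then (1:ℝ) else 0) * m w = m u := by
            simp [ite_mul, Finset.sum_ite_eq]
          simp_rw [hre, ← Finset.sum_mul, hsp, ← Finset.mul_sum, hmu]
        rw [h1, h2, h3]
      rw [hsplit]
      have hpmu : p u - m u = θ u - 1/2 := hpm u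
      field_simp
      ring_nf
      nlinarith [hpmu, sq_nonneg s]
    rw [hθeq]
    exact (convex_convexHull ℝ S) hc hymem (by linarith) (by linarith) (by ring)
end
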